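/- If R is a left fusible ring, then the Hahn series ring R((Γ)) over a linearly ordered abelian group Γ is left fusible. -/

import Mathlib

/-- `a` is a left zero-divisor of `R`. -/
def IsLeftZeroDivisor {R : Type*} [Ring R] (a : R) : Prop :=
  ∃ r : R, r ≠ 0 ∧ a * r = 0

/-- A ring is left fusible if every nonzero element is the sum of a left
zero-divisor and a non-left-zero-divisor. -/
def LeftFusible (R : Type*) [Ring R] : Prop :=
  ∀ a : R, a ≠ 0 → ∃ b c : R, IsLeftZeroDivisor b ∧ ¬ IsLeftZeroDivisor c ∧ a = b + c

/-- If `R` is left fusible, then the Hahn series ring `R((Γ))` over a linearly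
ordered abelian group `Γ` is left fusible. -/
theorem leftFusible_hahnSeries {R : Type*} [Ring R] (Γ : Type*)
    [AddCommGroup Γ] [LinearOrder Γ] [IsOrderedAddMonoid Γ] (hR : LeftFusible R) :
    LeftFusible (HahnSeries Γ R) := by
  intro a ha
  set G := a.order with hG
  have hag : a.coeff G ≠ 0 := by
    rw [hG, ← HahnSeries.leadingCoeff_eq]; exact HahnSeries.leadingCoeff_ne_zero.2 ha
  haveI : Nontrivial R := ⟨_, _, hag⟩
  obtain ⟨z, u, hz, hu, heq⟩ := hR _ hag
  have hu0 : u ≠ 0 := by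
    rintro rfl
    exact hu ⟨1, one_ne_zero, mul_one 0⟩
  set c : HahnSeries Γ R := a - HahnSeries.single G z with hc
  have hcoeffG : c.coeff G = u := by
    simp only [hc, HahnSeries.coeff_sub, HahnSeries.coeff_single_same]
    rw [heq]; abel
  have hc0 : c ≠ 0 := fun h => hu0 (by rw [← hcoeffG, h, HahnSeries.coeff_zero])
  have hordc : c.order = G := by
    refine le_antisymm (HahnSeries.order_le_of_coeff_ne_zero (hcoeffG ▸ hu0)) ?_
    by_contra hlt
    push_neg at hlt
    have hco : c.coeff c.order ≠ 0 := by
      rw [← HahnSeries.leadingCoeff_eq]; exact HahnSeries.leadingCoeff_ne_zero.2 hc0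
    apply hco
    have h1 : a.coeff c.order = 0 := HahnSeries.coeff_eq_zero_of_lt_order (hG ▸ hlt)
    have h2 : (HahnSeries.single G z).coeff c.order = 0 :=
      HahnSeries.coeff_single_of_ne (ne_of_lt hlt)
    show a.coeff c.order - (HahnSeries.single G z).coeff c.order = 0
    rw [h1, h2, sub_zero]
  have hlc : c.leadingCoeff = u := by rw [HahnSeries.leadingCoeff_eq, hordc, hcoeffG]
  refine ⟨HahnSeries.single G z, c, ?_, ?_, by rw [hc]; abel⟩
  · obtain ⟨r, hr, hzr⟩ := hz
    refine ⟨HahnSeries.single 0 r, ?_, ?_⟩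
    · simpa using hr
    · rw [HahnSeries.single_mul_single, hzr]; simp
  · rintro ⟨r, hr, hcr⟩
    have := HahnSeries.coeff_mul_order_add_order c r
    rw [hcr, HahnSeries.coeff_zero, hlc] at this
    exact hu ⟨r.leadingCoeff, HahnSeries.leadingCoeff_ne_zero.2 hr, this.symm⟩
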